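/- If v and w are weight structures on a triangulated category C with C^{v≤0} ⊆ C^{w≤0} and C^{v≥0} ⊆ C^{w≥0}, then v = w (both inclusions are equalities). -/

import Mathlib

open CategoryTheory Category Limits Pretriangulated

/-- `X` is a retract of `Y`. -/
def IsRetract {C : Type*} [Category C] (X Y : C) : Prop :=
  ∃ (i : X ⟶ Y) (r : Y ⟶ X), i ≫ r = 𝟙 X

/-- A weight structure on a triangulated category `C`, given by the pair of classes
`le = C^{w≤0}` and `ge = C^{w≥0}` (Bondarko). -/
structure IsWeightStructure (C : Type*) [Category C] [HasZeroObject C] [HasShift C ℤ]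
    [Preadditive C] [∀ n : ℤ, (shiftFunctor C n).Additive] [Pretriangulated C]
    (le ge : Set C) : Prop where
  le_retract : ∀ ⦃X Y : C⦄, Y ∈ le → IsRetract X Y → X ∈ le
  ge_retract : ∀ ⦃X Y : C⦄, Y ∈ ge → IsRetract X Y → X ∈ ge
  le_shift : ∀ ⦃X : C⦄, X ∈ le → X⟦(1 : ℤ)⟧ ∈ le
  ge_shift : ∀ ⦃X : C⦄, X ∈ ge → X⟦(-1 : ℤ)⟧ ∈ ge
  orth : ∀ ⦃X Y : C⦄, X ∈ ge → Y ∈ le → ∀ f : X ⟶ Y⟦(1 : ℤ)⟧, f = 0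
  decomp : ∀ M : C, ∃ (A B : C) (_ : A ∈ le) (_ : B ∈ ge)
    (f : M ⟶ A) (g : A ⟶ B) (h : B ⟶ M⟦(1 : ℤ)⟧), Triangle.mk f g h ∈ distTriang C

variable {C : Type*} [Category C] [HasZeroObject C] [HasShift C ℤ]
  [Preadditive C] [∀ n : ℤ, (shiftFunctor C n).Additive] [Pretriangulated C]

/-- If `v` and `w` are weight structures on `C` with `C^{v≤0} ⊆ C^{w≤0}` and
`C^{v≥0} ⊆ C^{w≥0}`, then `v = w`. -/
theorem isWeightStructure_unique (vle vge wle wge : Set C)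
    (v : IsWeightStructure C vle vge) (w : IsWeightStructure C wle wge)
    (hle : vle ⊆ wle) (hge : vge ⊆ wge) :
    vle = wle ∧ vge = wge := by
  constructor
  · refine Set.Subset.antisymm hle (fun M hM => ?_)
    obtain ⟨A, B, hA, hB, f, g, h, hT⟩ := v.decomp M
    -- the third map vanishes by `w`-orthogonality
    have h0 : h = 0 := w.orth (hge hB) hM h
    -- hence `f : M ⟶ A` is a split mono and `M` is a retract of `A ∈ vle`
    have : Mono f := Triangle.mono₁ _ hT h0
    have : IsSplitMono f := isSplitMono_of_mono f
    exact v.le_retract hA ⟨f, retraction f, IsSplitMono.id f⟩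
  · refine Set.Subset.antisymm hge (fun M hM => ?_)
    obtain ⟨A, B, hA, hB, f, g, h, hT⟩ := v.decomp (M⟦(-1 : ℤ)⟧)
    -- the first map `f : M⟦-1⟧ ⟶ A` vanishes
    have e : M⟦(-1 : ℤ)⟧⟦(1 : ℤ)⟧ ≅ M := shiftNegShift M 1
    have hf1 : e.inv ≫ f⟦(1 : ℤ)⟧' = 0 := w.orth hM (hle hA) _
    have hf2 : f⟦(1 : ℤ)⟧' = 0 := by
      rw [← cancel_epi e.inv, hf1, comp_zero]
    have hf : f = 0 := by
      have := (shiftFunctor C (1 : ℤ)).map_eq_zero_iff.mp hf2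
      exact this
    -- rotate: the triangle `A ⟶ B ⟶ M⟦-1⟧⟦1⟧` has vanishing third map,
    -- so `h` is a split epi and `M⟦-1⟧⟦1⟧ ≅ M` is a retract of `B ∈ vge`
    have hepi : Epi h := by
      have := Triangle.epi₂ _ (rot_of_distTriang _ hT) (by
        dsimp [Triangle.rotate]
        rw [hf]; dsimp only [Triangle.mk]; rw [Functor.map_zero]; exact neg_zero)
      exact this
    have : IsSplitEpi h := isSplitEpi_of_epi h
    refine v.ge_retract hB ⟨e.inv ≫ section_ h, h ≫ e.hom, ?_⟩
    rw [assoc, ← assoc (section_ h), IsSplitEpi.id h, id_comp, e.inv_hom_id]
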